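/- Let k > l ≥ 0 be integers, let α be a real with 0 ≤ α < 1, and let φ : (0,∞) → (0,∞) be a continuously differentiable increasing function. Define ψ(s,t) = s^α · φ(t) for s, t > 0 and η(t) = φ(t)^{−(k−l−1)/(1−α)}. Then η is nonincreasing on (0,∞), and for all reals t > s > 0 the condition (1.20) holds: (s·ψ(1,1) − ψ(s,t)) · (η(1)·ψ(1,1)^{k−l−1} − η(t)·ψ(s,t)^{k−l−1}) ≤ 0. -/
import Mathlib


/-- For integers `k > l ≥ 0`, `0 ≤ α < 1` and `φ : (0,∞) → (0,∞)` a `C¹` increasing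
function, with `ψ(s,t) = s^α·φ(t)` and `η(t) = φ(t)^{−(k−l−1)/(1−α)}`:
`η` is nonincreasing on `(0,∞)` and condition (1.20) holds:
`(s·ψ(1,1) − ψ(s,t)) · (η(1)·ψ(1,1)^{k−l−1} − η(t)·ψ(s,t)^{k−l−1}) ≤ 0` for `t > s > 0`. -/
theorem condition_1_20_of_power_times_increasing (k l : ℕ) (hlk : l < k)
    (α : ℝ) (hα0 : 0 ≤ α) (hα1 : α < 1)
    (φ : ℝ → ℝ) (hpos : ∀ t : ℝ, 0 < t → 0 < φ t)
    (hC1 : ContDiffOn ℝ 1 φ (Set.Ioi 0))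
    (hmono : MonotoneOn φ (Set.Ioi 0))
    (ψ : ℝ → ℝ → ℝ) (hψ : ∀ s t : ℝ, ψ s t = s ^ α * φ t)
    (η : ℝ → ℝ) (hη : ∀ t : ℝ, η t = φ t ^ (-(((k : ℝ) - (l : ℝ) - 1) / (1 - α)))) :
    AntitoneOn η (Set.Ioi 0) ∧
    ∀ s t : ℝ, 0 < s → s < t →
      (s * ψ 1 1 - ψ s t) *
        (η 1 * ψ 1 1 ^ ((k : ℝ) - (l : ℝ) - 1) -
          η t * ψ s t ^ ((k : ℝ) - (l : ℝ) - 1)) ≤ 0 := by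
  have hc : (0:ℝ) ≤ (k:ℝ) - l - 1 := by
    have : (l:ℝ) + 1 ≤ k := by exact_mod_cast hlk
    linarith
  set c : ℝ := (k:ℝ) - l - 1 with hcdef
  have h1α : (0:ℝ) < 1 - α := by linarith
  have he : 0 ≤ c / (1 - α) := div_nonneg hc h1α.le
  constructor
  · intro a ha b hb hab
    rw [hη, hη]
    exact Real.rpow_le_rpow_of_nonpos (hpos a ha) (hmono ha hb hab) (neg_nonpos.mpr he)
  · intro s t hs hst
    have ht : 0 < t := hs.trans hst
    have hφ1 : 0 < φ 1 := hpos 1 one_pos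
    have hφt : 0 < φ t := hpos t ht
    have hsα : 0 < s ^ α := Real.rpow_pos_of_pos hs α
    have hs1α : 0 < s ^ (1 - α) := Real.rpow_pos_of_pos hs _
    have hsplit : s = s ^ α * s ^ (1 - α) := by
      rw [← Real.rpow_add hs]; simp
    have hce : c - c / (1 - α) ≤ 0 := by
      rw [sub_nonpos, le_div_iff₀ h1α]
      nlinarith
    rw [hψ, hψ, hη, hη, Real.one_rpow, one_mul]
    have hηψ : φ t ^ (-(c / (1 - α))) * (s ^ α * φ t) ^ c
        = s ^ (α * c) * φ t ^ (c - c / (1 - α)) := by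
      rw [Real.mul_rpow hsα.le hφt.le, ← Real.rpow_mul hs.le, mul_left_comm,
        ← Real.rpow_add hφt]
      congr 1
      ring
    have hηψ1 : φ 1 ^ (-(c / (1 - α))) * φ 1 ^ c = φ 1 ^ (c - c / (1 - α)) := by
      rw [← Real.rpow_add hφ1]
      congr 1
      ring
    rw [hηψ, hηψ1]
    -- key computation: ((s^(1-α)) * φ 1) ^ (c - c/(1-α)) = s^(-(α*c)) * φ 1 ^ (c - c/(1-α))
    have hkey : (s ^ (1 - α) * φ 1) ^ (c - c / (1 - α))
        = s ^ (-(α * c)) * φ 1 ^ (c - c / (1 - α)) := by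
      rw [Real.mul_rpow hs1α.le hφ1.le, ← Real.rpow_mul hs.le]
      congr 2
      field_simp
      ring
    have hss : s ^ (α * c) * s ^ (-(α * c)) = 1 := by
      rw [← Real.rpow_add hs]; simp
    rcases le_total (s ^ α * φ t) (s * φ 1) with hA | hA
    · -- first factor ≥ 0, show second factor ≤ 0
      apply mul_nonpos_of_nonneg_of_nonpos (by linarith)
      rw [sub_nonpos]
      have h1 : φ t ≤ s ^ (1 - α) * φ 1 := by
        nth_rewrite 2 [hsplit] at hA
        rw [mul_assoc] at hA
        exact le_of_mul_le_mul_left hA hsα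
      have h2 : (s ^ (1 - α) * φ 1) ^ (c - c / (1 - α)) ≤ φ t ^ (c - c / (1 - α)) :=
        Real.rpow_le_rpow_of_nonpos hφt h1 hce
      rw [hkey] at h2
      calc φ 1 ^ (c - c / (1 - α))
          = s ^ (α * c) * (s ^ (-(α * c)) * φ 1 ^ (c - c / (1 - α))) := by
            rw [← mul_assoc, hss, one_mul]
        _ ≤ s ^ (α * c) * φ t ^ (c - c / (1 - α)) :=
            mul_le_mul_of_nonneg_left h2 (Real.rpow_pos_of_pos hs _).le
    · -- first factor ≤ 0, show second factor ≥ 0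
      apply mul_nonpos_of_nonpos_of_nonneg (by linarith)
      rw [sub_nonneg]
      have h1 : s ^ (1 - α) * φ 1 ≤ φ t := by
        nth_rewrite 1 [hsplit] at hA
        rw [mul_assoc] at hA
        exact le_of_mul_le_mul_left hA hsα
      have h2 : φ t ^ (c - c / (1 - α)) ≤ (s ^ (1 - α) * φ 1) ^ (c - c / (1 - α)) :=
        Real.rpow_le_rpow_of_nonpos (mul_pos hs1α hφ1) h1 hce
      rw [hkey] at h2
      calc s ^ (α * c) * φ t ^ (c - c / (1 - α))
          ≤ s ^ (α * c) * (s ^ (-(α * c)) * φ 1 ^ (c - c / (1 - α))) :=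
            mul_le_mul_of_nonneg_left h2 (Real.rpow_pos_of_pos hs _).le
        _ = φ 1 ^ (c - c / (1 - α)) := by rw [← mul_assoc, hss, one_mul]
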